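/- For countable linear orders L and L', if ℤ·L is isomorphic to ℤ·L' then L is isomorphic to L'. -/

import Mathlib

open Set

private lemma fst_eq_iff_finite {L : Type*} [LinearOrder L] (a b : L ×ₗ ℤ) :
    (ofLex a).1 = (ofLex b).1 ↔ (Set.Icc a b).Finite ∧ (Set.Icc b a).Finite := by
  constructor
  · intro hab
    constructor
    · apply Set.Finite.subset ((Set.finite_Icc (ofLex a).2 (ofLex b).2).image
        (fun n => toLex ((ofLex a).1, n)))
      rintro c ⟨hac, hcb⟩
      have h1 := Prod.Lex.monotone_fst a c hac
      have h2 := Prod.Lex.monotone_fst c b hcb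
      rw [← hab] at h2
      have hc1 : (ofLex c).1 = (ofLex a).1 := le_antisymm h2 h1
      rcases (Prod.Lex.le_iff (x := a) (y := c)).mp hac with h | h
      · exact absurd h hc1.le.not_gt
      rcases (Prod.Lex.le_iff (x := c) (y := b)).mp hcb with h' | h'
      · exact absurd (hc1.trans hab) h'.ne
      refine ⟨(ofLex c).2, ⟨h.2, h'.2⟩, ?_⟩
      show toLex ((ofLex a).1, (ofLex c).2) = c
      rw [← hc1]; rfl
    · apply Set.Finite.subset ((Set.finite_Icc (ofLex b).2 (ofLex a).2).image
        (fun n => toLex ((ofLex b).1, n)))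
      rintro c ⟨hbc, hca⟩
      have h1 := Prod.Lex.monotone_fst b c hbc
      have h2 := Prod.Lex.monotone_fst c a hca
      rw [hab] at h2
      have hc1 : (ofLex c).1 = (ofLex b).1 := le_antisymm h2 h1
      rcases (Prod.Lex.le_iff (x := b) (y := c)).mp hbc with h | h
      · exact absurd h hc1.le.not_gt
      rcases (Prod.Lex.le_iff (x := c) (y := a)).mp hca with h' | h'
      · exact absurd (hc1.trans hab.symm) h'.ne
      refine ⟨(ofLex c).2, ⟨h.2, h'.2⟩, ?_⟩
      show toLex ((ofLex b).1, (ofLex c).2) = c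
      rw [← hc1]; rfl
  · rintro ⟨hf1, hf2⟩
    by_contra hne
    rcases lt_or_gt_of_ne hne with hlt | hlt
    · apply (Set.infinite_of_injective_forall_mem
        (f := fun n : ℕ => toLex ((ofLex a).1, (ofLex a).2 + n)) ?_ ?_) hf1
      · intro m n hmn
        simpa using hmn
      · intro n
        refine ⟨(Prod.Lex.le_iff (x := a)).mpr (Or.inr ⟨rfl, by simp⟩),
          (Prod.Lex.le_iff (y := b)).mpr (Or.inl hlt)⟩
    · apply (Set.infinite_of_injective_forall_mem
        (f := fun n : ℕ => toLex ((ofLex b).1, (ofLex b).2 + n)) ?_ ?_) hf2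
      · intro m n hmn
        simpa using hmn
      · intro n
        refine ⟨(Prod.Lex.le_iff (x := b)).mpr (Or.inr ⟨rfl, by simp⟩),
          (Prod.Lex.le_iff (y := a)).mpr (Or.inl hlt)⟩

private lemma fst_eq_fst_map {L L' : Type*} [LinearOrder L] [LinearOrder L']
    (f : (L ×ₗ ℤ) ≃o (L' ×ₗ ℤ)) (a b : L ×ₗ ℤ) :
    (ofLex (f a)).1 = (ofLex (f b)).1 ↔ (ofLex a).1 = (ofLex b).1 := by
  rw [fst_eq_iff_finite, fst_eq_iff_finite a b]
  have h1 : Set.Icc (f a) (f b) = f '' Set.Icc a b := (f.image_Icc a b).symm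
  have h2 : Set.Icc (f b) (f a) = f '' Set.Icc b a := (f.image_Icc b a).symm
  rw [h1, h2, Set.finite_image_iff f.injective.injOn,
    Set.finite_image_iff f.injective.injOn]

/-- For countable linear orders `L` and `L'`, if `ℤ·L ≅ ℤ·L'` then `L ≅ L'`. -/
theorem stmt_11 {L L' : Type*} [LinearOrder L] [LinearOrder L']
    [Countable L] [Countable L']
    (h : Nonempty ((L ×ₗ ℤ) ≃o (L' ×ₗ ℤ))) : Nonempty (L ≃o L') := by
  obtain ⟨f⟩ := h
  set g : L → L' := fun l => (ofLex (f (toLex (l, 0)))).1 with hg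
  set g' : L' → L := fun l => (ofLex (f.symm (toLex (l, 0)))).1 with hg'
  have hgg' : ∀ l, g' (g l) = l := by
    intro l
    have := (fst_eq_fst_map f.symm (toLex (g l, 0)) (f (toLex (l, 0)))).mpr
    simp only [f.symm_apply_apply] at this
    exact this rfl
  have hg'g : ∀ l, g (g' l) = l := by
    intro l
    have := (fst_eq_fst_map f (toLex (g' l, 0)) (f.symm (toLex (l, 0)))).mpr
    simp only [f.apply_symm_apply] at this
    exact this rfl
  have hmono : Monotone g := by
    intro l₁ l₂ hle
    rcases hle.eq_or_lt with rfl | hlt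
    · exact le_rfl
    · exact Prod.Lex.monotone_fst _ _
        (f.le_iff_le.mpr (Prod.Lex.toLex_mono ⟨hlt.le, le_rfl⟩))
  have hmono' : Monotone g' := by
    intro l₁ l₂ hle
    rcases hle.eq_or_lt with rfl | hlt
    · exact le_rfl
    · exact Prod.Lex.monotone_fst _ _
        (f.symm.le_iff_le.mpr (Prod.Lex.toLex_mono ⟨hlt.le, le_rfl⟩))
  exact ⟨Equiv.toOrderIso ⟨g, g', hgg', hg'g⟩ hmono hmono'⟩
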